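/- Let (D,⊢,⊣,∘) be a di-skew brace. Then the set of bar-units of the g-digroup (D,⊢,⊣) coincides with the set of idempotents of (D,∘): an element e ∈ D satisfies e ∈ E(D) if and only if e ∘ e = e. -/
import Mathlib


/-- An element `e` is a *bar-unit* for the pair of operations `(⊢, ⊣)` if
`e ⊢ a = a = a ⊣ e` for all `a`. -/
def IsBarUnit {D : Type*} (vd dv : D → D → D) (e : D) : Prop :=
  ∀ a : D, vd e a = a ∧ dv a e = a

/-- A generalized digroup (g-digroup): two associative operations `vd` (`⊢`) and `dv` (`⊣`)
satisfying inner associativity and the two bar-side irrelevance laws, admitting at least one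
bar-unit, and such that for every element `a` and every bar-unit `e` there is a unique pair
`(I e a, J e a)` with `(I e a) ⊣ a = e = a ⊢ (J e a)`. -/
structure GDigroup (D : Type*) where
  vd : D → D → D
  dv : D → D → D
  vd_assoc : ∀ a b c : D, vd (vd a b) c = vd a (vd b c)
  dv_assoc : ∀ a b c : D, dv (dv a b) c = dv a (dv b c)
  inner_assoc : ∀ a b c : D, dv (vd a b) c = vd a (dv b c)
  bar_right : ∀ a b c : D, dv a (vd b c) = dv a (dv b c)
  bar_left : ∀ a b c : D, vd (vd a b) c = vd (dv a b) c
  exists_barUnit : ∃ e : D, IsBarUnit vd dv e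
  I : D → D → D
  J : D → D → D
  I_spec : ∀ e a : D, IsBarUnit vd dv e → dv (I e a) a = e
  J_spec : ∀ e a : D, IsBarUnit vd dv e → vd a (J e a) = e
  I_unique : ∀ e a x : D, IsBarUnit vd dv e → dv x a = e → x = I e a
  J_unique : ∀ e a y : D, IsBarUnit vd dv e → vd a y = e → y = J e a
/-- A (left) di-skew brace: the additive structure `(D, ⊢, ⊣)` is a g-digroup, the
multiplicative structure `(D, ∘)` is a right group (an associative operation such that for
all `a b` there is a unique `x` with `a ∘ x = b`), and the compatibility laws
`a ∘ (b ⊢ c) = a ∘ b ⊢ a⁻¹ ⊢ a ∘ c`, `a ∘ (b ⊣ c) = a ∘ b ⊣ a⁻¹ ⊣ a ∘ c` and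
`(a ⊢ b) ∘ c = (a ⊣ b) ∘ c` hold, where `a⁻¹ ⊢ x` means `(I e a) ⊢ x` and `x ⊣ a⁻¹` means
`x ⊣ (J e a)` for any bar-unit `e`. -/
structure DiSkewBrace (D : Type*) extends GDigroup D where
  circ : D → D → D
  circ_assoc : ∀ a b c : D, circ (circ a b) c = circ a (circ b c)
  circ_rightGroup : ∀ a b : D, ∃! x : D, circ a x = b
  d1 : ∀ e : D, IsBarUnit vd dv e →
    ∀ a b c : D, circ a (vd b c) = vd (circ a b) (vd (I e a) (circ a c))
  d2 : ∀ e : D, IsBarUnit vd dv e →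
    ∀ a b c : D, circ a (dv b c) = dv (dv (circ a b) (J e a)) (circ a c)
  d3 : ∀ a b c : D, circ (vd a b) c = circ (dv a b) c

/-- In a di-skew brace `(D, ⊢, ⊣, ∘)` the set of bar-units of the
g-digroup `(D, ⊢, ⊣)` coincides with the set of idempotents of `(D, ∘)`. -/
theorem diSkewBrace_barUnit_iff_circ_idempotent {D : Type*} (S : DiSkewBrace D) (e : D) :
    IsBarUnit S.vd S.dv e ↔ S.circ e e = e := by
  obtain ⟨f, hf⟩ := S.exists_barUnit
  constructor
  · intro he
    have hee_vd : S.vd e e = e := (he e).1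
    have hee_dv : S.dv e e = e := (he e).2
    have hIee : S.I e e = e := (S.I_unique e e e he hee_dv).symm
    -- t := e ∘ e satisfies t ⊢ t = t
    have h1 : S.circ e e = S.vd (S.circ e e) (S.circ e e) := by
      have h := S.d1 e he e e e
      rwa [hee_vd, hIee, (he (S.circ e e)).1] at h
    -- then t ⊢ e = e
    have h2 : S.vd (S.circ e e) e = e := by
      calc S.vd (S.circ e e) e
          = S.vd (S.circ e e) (S.vd (S.circ e e) (S.J e (S.circ e e))) := by
            rw [S.J_spec e (S.circ e e) he]
        _ = S.vd (S.vd (S.circ e e) (S.circ e e)) (S.J e (S.circ e e)) :=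
            (S.vd_assoc _ _ _).symm
        _ = S.vd (S.circ e e) (S.J e (S.circ e e)) := by rw [← h1]
        _ = e := S.J_spec e (S.circ e e) he
    -- d3 gives e ∘ c = (e∘e) ∘ c for all c
    have h3 : ∀ c, S.circ e c = S.circ e (S.circ e c) := by
      intro c
      have h := S.d3 (S.circ e e) e c
      rw [h2, (he (S.circ e e)).2, S.circ_assoc] at h
      exact h
    obtain ⟨x, hx, hux⟩ := S.circ_rightGroup e (S.circ e e)
    have := (hux e rfl).trans (hux (S.circ e e) (h3 e).symm).symm
    exact this.symm
  · intro he
    -- e is a left identity for ∘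
    have leftid : ∀ c, S.circ e c = c := by
      intro c
      obtain ⟨x, hx, hux⟩ := S.circ_rightGroup e (S.circ e c)
      have h1 : S.circ e (S.circ e c) = S.circ e c := by
        rw [← S.circ_assoc, he]
      exact ((hux c rfl).trans (hux (S.circ e c) h1).symm).symm
    -- u := I f e is a left identity for ⊢
    have hu : ∀ c, S.vd (S.I f e) c = c := by
      intro c
      have h := S.d1 f hf e f c
      rw [leftid, leftid, leftid, (hf c).1, (hf (S.vd (S.I f e) c)).1] at h
      exact h.symm
    -- dv · (J f e) is the identity
    have hv : ∀ b, S.dv b (S.J f e) = b := by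
      intro b
      have h := S.d2 f hf e b f
      rw [leftid, leftid, leftid, (hf b).2, (hf (S.dv b (S.J f e))).2] at h
      exact h.symm
    intro a
    constructor
    · calc S.vd e a
          = S.vd (S.dv e (S.J f e)) a := by rw [hv e]
        _ = S.vd (S.vd e (S.J f e)) a := (S.bar_left _ _ _).symm
        _ = S.vd f a := by rw [S.J_spec f e hf]
        _ = a := (hf a).1
    · calc S.dv a e
          = S.dv a (S.vd (S.I f e) e) := by rw [hu e]
        _ = S.dv a (S.dv (S.I f e) e) := S.bar_right _ _ _
        _ = S.dv a f := by rw [S.I_spec f e hf]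
        _ = a := (hf a).2
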